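/- For all ε ∈ ℝ, all Schwartz functions f, g : ℝ² → ℂ, and every point (x,y) ∈ ℝ², the semiclassical limit holds: lim_{ℏ → 0⁺} (f ⋆_{ℏ,ε} g)(x,y) = f(x,y) · g(x,y). -/

import Mathlib

open MeasureTheory Complex Filter

/-- The ε-deformed kernel at base point `m = (x,y)`, on `a = (x'',y'')`, `b = (x',y')`:
`exp((i/ℏ)·[(x''−x)(y−y') − (y''−y)(x−x') + ε(y·y' − y'·y'' + y·y'' − y²)])`. -/
noncomputable def epsKernel (ℏ ε : ℝ) (m a b : ℝ × ℝ) : ℂ :=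
  Complex.exp (Complex.I / ℏ *
    (((a.1 - m.1) * (m.2 - b.2) - (a.2 - m.2) * (m.1 - b.1)
      + ε * (m.2 * b.2 - b.2 * a.2 + m.2 * a.2 - m.2 ^ 2) : ℝ) : ℂ))

/-- The ε-deformed product `(f ⋆_{ℏ,ε} g)(x,y)`. -/
noncomputable def moyalEps (ℏ ε : ℝ) (f g : ℝ × ℝ → ℂ) : ℝ × ℝ → ℂ :=
  fun m => ((2 * Real.pi * ℏ) ^ 2 : ℝ)⁻¹ •
    ∫ ab : (ℝ × ℝ) × (ℝ × ℝ), f ab.1 * g ab.2 * epsKernel ℏ ε m ab.1 ab.2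

/-- Partial derivative in the first (x) variable. -/
noncomputable def pderivX (f : ℝ × ℝ → ℂ) (m : ℝ × ℝ) : ℂ := fderiv ℝ f m (1, 0)

/-- Partial derivative in the second (y) variable. -/
noncomputable def pderivY (f : ℝ × ℝ → ℂ) (m : ℝ × ℝ) : ℂ := fderiv ℝ f m (0, 1)

/-- The Poisson bracket `{f,g} = ∂ₓf·∂_yg − ∂_yf·∂ₓg` on ℝ². -/
noncomputable def pbracket (f g : ℝ × ℝ → ℂ) (m : ℝ × ℝ) : ℂ :=
  pderivX f m * pderivY g m - pderivY f m * pderivX g m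

open Real SchwartzMap
open scoped FourierTransform RealInnerProductSpace

noncomputable abbrev E2 : Type := EuclideanSpace ℝ (Fin 2)

noncomputable def LE2 : E2 ≃L[ℝ] ℝ × ℝ :=
  (EuclideanSpace.equiv (Fin 2) ℝ).trans (ContinuousLinearEquiv.finTwoArrow ℝ ℝ)

noncomputable def fE (f : SchwartzMap (ℝ × ℝ) ℂ) : SchwartzMap E2 ℂ :=
  SchwartzMap.compCLMOfContinuousLinearEquiv ℝ LE2 f

lemma measurePreserving_LE2 : MeasurePreserving (⇑LE2) volume volume :=
  (MeasureTheory.volume_preserving_finTwoArrow ℝ).comp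
    (EuclideanSpace.volume_preserving_symm_measurableEquiv_toLp (Fin 2))

lemma measurePreserving_LE2_symm : MeasurePreserving (⇑LE2.symm) volume volume :=
  ((EuclideanSpace.volume_preserving_symm_measurableEquiv_toLp (Fin 2)).symm).comp
    ((MeasureTheory.volume_preserving_finTwoArrow ℝ).symm _)

lemma fE_apply (f : SchwartzMap (ℝ × ℝ) ℂ) (v : E2) : fE f v = f (LE2 v) := rfl

noncomputable def Fhat (f : SchwartzMap (ℝ × ℝ) ℂ) : E2 → ℂ := 𝓕 ⇑(fE f)

lemma Fhat_eq_schwartz (f : SchwartzMap (ℝ × ℝ) ℂ) :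
    Fhat f = ⇑(SchwartzMap.fourierTransformCLM ℝ (fE f)) := by
  rw [SchwartzMap.fourierTransformCLM_apply]; rfl

lemma Fhat_continuous (f : SchwartzMap (ℝ × ℝ) ℂ) : Continuous (Fhat f) := by
  rw [Fhat_eq_schwartz]; exact (SchwartzMap.fourierTransformCLM ℝ (fE f)).continuous

lemma Fhat_integrable (f : SchwartzMap (ℝ × ℝ) ℂ) : Integrable (Fhat f) := by
  rw [Fhat_eq_schwartz]; exact (SchwartzMap.fourierTransformCLM ℝ (fE f)).integrable

noncomputable def Hfun (f : SchwartzMap (ℝ × ℝ) ℂ) (m : ℝ × ℝ) : E2 → ℂ :=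
  fun w => Complex.exp (((2 * π * ⟪w, LE2.symm m⟫ : ℝ) : ℂ) * Complex.I) * Fhat f w

lemma Hfun_continuous (f : SchwartzMap (ℝ × ℝ) ℂ) (m : ℝ × ℝ) : Continuous (Hfun f m) := by
  apply Continuous.mul _ (Fhat_continuous f)
  apply Continuous.cexp
  apply Continuous.mul _ continuous_const
  exact Complex.continuous_ofReal.comp
    ((continuous_const.mul (continuous_id.inner continuous_const)))

lemma Hfun_norm (f : SchwartzMap (ℝ × ℝ) ℂ) (m : ℝ × ℝ) (w : E2) :
    ‖Hfun f m w‖ = ‖Fhat f w‖ := by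
  rw [Hfun, norm_mul]
  rw [Complex.norm_exp_ofReal_mul_I]
  ring

lemma Hfun_integrable (f : SchwartzMap (ℝ × ℝ) ℂ) (m : ℝ × ℝ) : Integrable (Hfun f m) := by
  refine (Fhat_integrable f).norm.mono' (Hfun_continuous f m).aestronglyMeasurable ?_
  filter_upwards with w
  rw [Hfun_norm]

lemma integral_Hfun (f : SchwartzMap (ℝ × ℝ) ℂ) (m : ℝ × ℝ) :
    ∫ w : E2, Hfun f m w = f m := by
  have hinv := MeasureTheory.Integrable.fourierInv_fourier_eq (f := ⇑(fE f))
    ((fE f).integrable) (by rw [← Fhat]; exact Fhat_integrable f)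
    ((fE f).continuous.continuousAt (x := LE2.symm m))
  have : 𝓕⁻ (𝓕 ⇑(fE f)) (LE2.symm m) = ∫ w : E2, Hfun f m w := by
    rw [Real.fourierInv_eq']
    apply congrArg
    funext v
    rw [Hfun, smul_eq_mul, Fhat]
  rw [← this, hinv, fE_apply]
  simp

@[simp] lemma LE2_symm_fst (p : ℝ × ℝ) : (LE2.symm p) 0 = p.1 := rfl
@[simp] lemma LE2_symm_snd (p : ℝ × ℝ) : (LE2.symm p) 1 = p.2 := rfl
lemma LE2_apply (v : E2) : LE2 v = (v 0, v 1) := rfl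

noncomputable def Ffun (f : SchwartzMap (ℝ × ℝ) ℂ) (m : ℝ × ℝ) : ℝ × ℝ → ℂ :=
  fun w => ∫ a : ℝ × ℝ, f a *
    Complex.exp (Complex.I * (((a.1 - m.1) * w.1 - (a.2 - m.2) * w.2 : ℝ) : ℂ))

lemma Ffun_rep (f : SchwartzMap (ℝ × ℝ) ℂ) (m : ℝ × ℝ) (w : ℝ × ℝ) :
    Ffun f m w = Hfun f m (LE2.symm (-(2*π)⁻¹ * w.1, (2*π)⁻¹ * w.2)) := by
  set ξ : E2 := LE2.symm (-(2*π)⁻¹ * w.1, (2*π)⁻¹ * w.2) with hξ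
  have hemb : MeasurableEmbedding (⇑LE2) := LE2.toHomeomorph.measurableEmbedding
  have h0 : Ffun f m w = ∫ v : E2, f (LE2 v) *
      Complex.exp (Complex.I * ((((LE2 v).1 - m.1) * w.1 - ((LE2 v).2 - m.2) * w.2 : ℝ) : ℂ)) := by
    rw [Ffun, ← measurePreserving_LE2.integral_comp hemb]
  have hr : ∀ v : E2, (((LE2 v).1 - m.1) * w.1 - ((LE2 v).2 - m.2) * w.2 : ℝ)
      = (-(m.1 * w.1) + m.2 * w.2) + (-2 * π * ⟪v, ξ⟫) := by
    intro v
    simp only [LE2_apply, hξ, PiLp.inner_apply, RCLike.inner_apply, Fin.sum_univ_two,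
      LE2_symm_fst, LE2_symm_snd, starRingEnd_apply, star_trivial]
    field_simp
    ring
  have hpt : ∀ v : E2, f (LE2 v) *
      Complex.exp (Complex.I * ((((LE2 v).1 - m.1) * w.1 - ((LE2 v).2 - m.2) * w.2 : ℝ) : ℂ))
      = Complex.exp (((-(m.1 * w.1) + m.2 * w.2 : ℝ) : ℂ) * Complex.I) *
        (Complex.exp (((-2 * π * ⟪v, ξ⟫ : ℝ) : ℂ) * Complex.I) • fE f v) := by
    intro v
    rw [smul_eq_mul, fE_apply, hr v, Complex.ofReal_add, mul_add, Complex.exp_add,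
      mul_comm Complex.I ((-(m.1 * w.1) + m.2 * w.2 : ℝ) : ℂ),
      mul_comm Complex.I ((-2 * π * ⟪v, ξ⟫ : ℝ) : ℂ)]
    ring
  rw [h0]
  simp_rw [hpt]
  rw [MeasureTheory.integral_const_mul, ← Real.fourier_eq']
  rw [Hfun]
  have hph : ((-(m.1 * w.1) + m.2 * w.2 : ℝ) : ℂ) = ((2 * π * ⟪ξ, LE2.symm m⟫ : ℝ) : ℂ) := by
    norm_cast
    simp only [hξ, PiLp.inner_apply, RCLike.inner_apply, Fin.sum_univ_two,
      LE2_symm_fst, LE2_symm_snd, starRingEnd_apply, star_trivial]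
    field_simp
  rw [hph]
  rfl

noncomputable def Bmap (ε : ℝ) : (ℝ × ℝ) →ₗ[ℝ] ℝ × ℝ :=
  Matrix.toLin (Module.Basis.finTwoProd ℝ) (Module.Basis.finTwoProd ℝ)
    !![0, -(2*π)⁻¹; (2*π)⁻¹, -ε*(2*π)⁻¹]

lemma Bmap_apply (ε : ℝ) (c : ℝ × ℝ) :
    Bmap ε c = (-(2*π)⁻¹ * c.2, (2*π)⁻¹ * c.1 + (-ε*(2*π)⁻¹) * c.2) := by
  simp [Bmap, Matrix.toLin_finTwoProd_apply]

lemma Bmap_det (ε : ℝ) : LinearMap.det (Bmap ε) = (4*π^2)⁻¹ := by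
  rw [Bmap, LinearMap.det_toLin, Matrix.det_fin_two_of]
  field_simp
  ring

lemma Bmap_det_ne (ε : ℝ) : LinearMap.det (Bmap ε) ≠ 0 := by
  rw [Bmap_det]; positivity

lemma integral_comp_linearMap' (A : (ℝ × ℝ) →ₗ[ℝ] ℝ × ℝ) (hA : LinearMap.det A ≠ 0)
    (H : ℝ × ℝ → ℂ) (hH : Continuous H) :
    ∫ c : ℝ × ℝ, H (A c) = |LinearMap.det A|⁻¹ • ∫ u : ℝ × ℝ, H u := by
  have hmap := Measure.map_linearMap_addHaar_eq_smul_addHaar (volume : Measure (ℝ × ℝ)) hA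
  have hmeas : AEMeasurable (⇑A) (volume : Measure (ℝ × ℝ)) :=
    (A.continuous_of_finiteDimensional).measurable.aemeasurable
  have h1 : ∫ c : ℝ × ℝ, H (A c) = ∫ u, H u ∂(volume.map ⇑A) := by
    rw [integral_map hmeas hH.aestronglyMeasurable]
  rw [h1, hmap, integral_smul_measure]
  congr 1
  rw [ENNReal.toReal_ofReal (abs_nonneg _), abs_inv]

lemma integrable_comp_linearMap' (A : (ℝ × ℝ) →ₗ[ℝ] ℝ × ℝ) (hA : LinearMap.det A ≠ 0)
    (H : ℝ × ℝ → ℂ) (hH : Integrable H) (hHm : AEStronglyMeasurable H (volume : Measure (ℝ × ℝ))) :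
    Integrable (fun c => H (A c)) := by
  have hmap := Measure.map_linearMap_addHaar_eq_smul_addHaar (volume : Measure (ℝ × ℝ)) hA
  have hmeas : AEMeasurable (⇑A) (volume : Measure (ℝ × ℝ)) :=
    (A.continuous_of_finiteDimensional).measurable.aemeasurable
  have h2 : Integrable H (volume.map ⇑A) := by
    rw [hmap]
    exact hH.smul_measure ENNReal.ofReal_ne_top
  have hm2 : AEStronglyMeasurable H (volume.map ⇑A) := by
    rw [hmap]; exact hHm.mono_ac Measure.smul_absolutelyContinuous
  exact (integrable_map_measure hm2 hmeas).mp h2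

noncomputable def Gfun (ε : ℝ) (f : SchwartzMap (ℝ × ℝ) ℂ) (m : ℝ × ℝ) : ℝ × ℝ → ℂ :=
  fun c => Ffun f m (c.2, c.1 - ε * c.2)

lemma Gfun_eq (ε : ℝ) (f : SchwartzMap (ℝ × ℝ) ℂ) (m : ℝ × ℝ) (c : ℝ × ℝ) :
    Gfun ε f m c = (fun u => Hfun f m (LE2.symm u)) (Bmap ε c) := by
  rw [Gfun, Ffun_rep, Bmap_apply]
  norm_num
  ring_nf

lemma HL_integrable (f : SchwartzMap (ℝ × ℝ) ℂ) (m : ℝ × ℝ) :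
    Integrable (fun u => Hfun f m (LE2.symm u)) := by
  have hemb : MeasurableEmbedding (⇑LE2.symm) := LE2.symm.toHomeomorph.measurableEmbedding
  exact (measurePreserving_LE2_symm.integrable_comp_emb hemb).mpr (Hfun_integrable f m)

lemma HL_continuous (f : SchwartzMap (ℝ × ℝ) ℂ) (m : ℝ × ℝ) :
    Continuous (fun u => Hfun f m (LE2.symm u)) :=
  (Hfun_continuous f m).comp LE2.symm.continuous

lemma Gfun_continuous (ε : ℝ) (f : SchwartzMap (ℝ × ℝ) ℂ) (m : ℝ × ℝ) :
    Continuous (Gfun ε f m) := by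
  have : Gfun ε f m = fun c => (fun u => Hfun f m (LE2.symm u)) (Bmap ε c) :=
    funext (Gfun_eq ε f m)
  rw [this]
  exact (HL_continuous f m).comp (Bmap ε).continuous_of_finiteDimensional

lemma Gfun_integrable (ε : ℝ) (f : SchwartzMap (ℝ × ℝ) ℂ) (m : ℝ × ℝ) :
    Integrable (Gfun ε f m) := by
  have : Gfun ε f m = fun c => (fun u => Hfun f m (LE2.symm u)) (Bmap ε c) :=
    funext (Gfun_eq ε f m)
  rw [this]
  exact integrable_comp_linearMap' (Bmap ε) (Bmap_det_ne ε) _ (HL_integrable f m)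
    (HL_continuous f m).aestronglyMeasurable

lemma integral_Gfun (ε : ℝ) (f : SchwartzMap (ℝ × ℝ) ℂ) (m : ℝ × ℝ) :
    ∫ c : ℝ × ℝ, Gfun ε f m c = (4 * π ^ 2 : ℝ) • (f m : ℂ) := by
  have h1 : ∫ c : ℝ × ℝ, Gfun ε f m c
      = ∫ c : ℝ × ℝ, (fun u => Hfun f m (LE2.symm u)) (Bmap ε c) := by
    exact integral_congr_ae (Filter.Eventually.of_forall (Gfun_eq ε f m))
  have hemb : MeasurableEmbedding (⇑LE2.symm) := LE2.symm.toHomeomorph.measurableEmbedding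
  rw [h1, integral_comp_linearMap' (Bmap ε) (Bmap_det_ne ε) _ (HL_continuous f m),
    measurePreserving_LE2_symm.integral_comp hemb, integral_Hfun, Bmap_det]
  rw [abs_inv, inv_inv]
  congr 1
  rw [_root_.abs_of_nonneg (by positivity : (0:ℝ) ≤ 4 * π ^ 2)]

lemma epsKernel_eq (ℏ ε : ℝ) (m : ℝ × ℝ) (hℏ : ℏ ≠ 0) (a b : ℝ × ℝ) :
    epsKernel ℏ ε m a b = Complex.exp (Complex.I *
      (((a.1 - m.1) * ((m.2 - b.2)/ℏ) - (a.2 - m.2) * (((m.1 - b.1) - ε*(m.2 - b.2))/ℏ) : ℝ) : ℂ)) := by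
  rw [epsKernel]
  congr 1
  have hc : (ℏ : ℂ) ≠ 0 := Complex.ofReal_ne_zero.mpr hℏ
  push_cast
  field_simp
  ring

lemma epsKernel_norm (ℏ ε : ℝ) (m a b : ℝ × ℝ) : ‖epsKernel ℏ ε m a b‖ = 1 := by
  rw [epsKernel, Complex.norm_exp]
  norm_num
  right; right; simp [pow_two]

lemma epsKernel_continuous (ℏ ε : ℝ) (m : ℝ × ℝ) :
    Continuous (fun ab : (ℝ × ℝ) × (ℝ × ℝ) => epsKernel ℏ ε m ab.1 ab.2) := by
  apply Complex.continuous_exp.comp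
  apply Continuous.mul continuous_const
  apply Complex.continuous_ofReal.comp
  fun_prop

lemma prod_integrable (ℏ ε : ℝ) (f g : SchwartzMap (ℝ × ℝ) ℂ) (m : ℝ × ℝ) :
    Integrable (fun ab : (ℝ × ℝ) × (ℝ × ℝ) =>
      f ab.1 * g ab.2 * epsKernel ℏ ε m ab.1 ab.2) := by
  have h1 : Integrable (fun ab : (ℝ × ℝ) × (ℝ × ℝ) => f ab.1 * g ab.2) := by
    rw [MeasureTheory.Measure.volume_eq_prod]
    exact f.integrable.mul_prod g.integrable
  refine h1.norm.mono' ?_ ?_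
  · exact (((f.continuous.comp continuous_fst).mul
      (g.continuous.comp continuous_snd)).mul (epsKernel_continuous ℏ ε m)).aestronglyMeasurable
  · filter_upwards with ab
    rw [norm_mul, epsKernel_norm, mul_one]

lemma stepB (ℏ ε : ℝ) (f g : SchwartzMap (ℝ × ℝ) ℂ) (m : ℝ × ℝ) (hℏ : ℏ ≠ 0) :
    ∫ ab : (ℝ × ℝ) × (ℝ × ℝ), f ab.1 * g ab.2 * epsKernel ℏ ε m ab.1 ab.2
      = ∫ b : ℝ × ℝ, g b * Ffun f m ((m.2 - b.2)/ℏ, ((m.1 - b.1) - ε*(m.2 - b.2))/ℏ) := by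
  have hint := prod_integrable ℏ ε f g m
  rw [MeasureTheory.Measure.volume_eq_prod] at hint ⊢
  rw [MeasureTheory.integral_prod _ hint]
  rw [MeasureTheory.integral_integral_swap hint]
  apply congrArg
  funext b
  have : ∀ a : ℝ × ℝ, f a * g b * epsKernel ℏ ε m a b
      = g b * (f a * Complex.exp (Complex.I *
        (((a.1 - m.1) * ((m.2 - b.2)/ℏ) - (a.2 - m.2) * (((m.1 - b.1) - ε*(m.2 - b.2))/ℏ) : ℝ) : ℂ))) := by
    intro a
    rw [epsKernel_eq ℏ ε m hℏ]
    ring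
  simp_rw [this]
  rw [MeasureTheory.integral_const_mul]
  rfl

lemma stepC (ℏ ε : ℝ) (f g : SchwartzMap (ℝ × ℝ) ℂ) (m : ℝ × ℝ) (hℏ : 0 < ℏ) :
    ∫ b : ℝ × ℝ, g b * Ffun f m ((m.2 - b.2)/ℏ, ((m.1 - b.1) - ε*(m.2 - b.2))/ℏ)
      = (ℏ^2) • ∫ c : ℝ × ℝ, g (m - ℏ • c) * Gfun ε f m c := by
  set χ : ℝ × ℝ → ℂ := fun b =>
    g b * Ffun f m ((m.2 - b.2)/ℏ, ((m.1 - b.1) - ε*(m.2 - b.2))/ℏ) with hχ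
  have hpt : ∀ c : ℝ × ℝ, g (m - ℏ • c) * Gfun ε f m c = χ (m - ℏ • c) := by
    intro c
    rw [hχ]
    apply congrArg
    rw [Gfun]
    apply congrArg
    have h1 : (m - ℏ • c).1 = m.1 - ℏ * c.1 := rfl
    have h2 : (m - ℏ • c).2 = m.2 - ℏ * c.2 := rfl
    rw [Prod.ext_iff]
    constructor
    · show c.2 = (m.2 - (m - ℏ • c).2)/ℏ
      rw [h2]; field_simp; ring
    · show c.1 - ε * c.2 = ((m.1 - (m - ℏ • c).1) - ε * (m.2 - (m - ℏ • c).2))/ℏ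
      rw [h1, h2]; field_simp; ring
  have hsmul : ∫ c : ℝ × ℝ, g (m - ℏ • c) * Gfun ε f m c
      = ∫ c : ℝ × ℝ, (fun u => χ (m - u)) (ℏ • c) := by
    exact congrArg _ (funext hpt)
  rw [hsmul, MeasureTheory.Measure.integral_comp_smul volume (fun u => χ (m - u)) ℏ]
  have htr : ∫ u : ℝ × ℝ, χ (m - u) = ∫ u : ℝ × ℝ, χ u := by
    have h1 : (fun u : ℝ × ℝ => χ (m - u)) = fun u => (fun v => χ (m + v)) (-u) := by
      funext u; rw [sub_eq_add_neg]
    rw [h1, integral_neg_eq_self (fun v => χ (m + v)) volume,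
      integral_add_left_eq_self χ m]
  rw [htr, show Module.finrank ℝ (ℝ × ℝ) = 2 by simp, smul_smul,
    abs_inv, _root_.abs_of_nonneg (by positivity : (0:ℝ) ≤ ℏ^2),
    mul_inv_cancel₀ (by positivity : (ℏ:ℝ)^2 ≠ 0), one_smul]

lemma stepD (ε : ℝ) (f g : SchwartzMap (ℝ × ℝ) ℂ) (m : ℝ × ℝ) :
    Tendsto (fun ℏ : ℝ => ∫ c : ℝ × ℝ, g (m - ℏ • c) * Gfun ε f m c)
      (nhdsWithin 0 (Set.Ioi 0)) (nhds (∫ c : ℝ × ℝ, g m * Gfun ε f m c)) := by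
  apply MeasureTheory.tendsto_integral_filter_of_dominated_convergence
    (bound := fun c => (SchwartzMap.seminorm ℝ 0 0 g : ℝ) * ‖Gfun ε f m c‖)
  · filter_upwards with ℏ
    exact ((g.continuous.comp (continuous_const.sub (continuous_id.const_smul ℏ))).mul
      (Gfun_continuous ε f m)).aestronglyMeasurable
  · filter_upwards with ℏ
    filter_upwards with c
    rw [norm_mul]
    exact mul_le_mul_of_nonneg_right (g.norm_le_seminorm ℝ _) (norm_nonneg _)
  · exact (Gfun_integrable ε f m).norm.const_mul _
  · filter_upwards with c
    have h1 : Tendsto (fun ℏ : ℝ => m - ℏ • c) (nhdsWithin 0 (Set.Ioi 0)) (nhds m) := by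
      have h2 : Tendsto (fun ℏ : ℝ => m - ℏ • c) (nhds 0) (nhds (m - (0:ℝ) • c)) :=
        (continuous_const.sub (continuous_id.smul continuous_const)).tendsto 0
      rw [zero_smul, sub_zero] at h2
      exact h2.mono_left nhdsWithin_le_nhds
    exact (Tendsto.comp (g.continuous.tendsto m) h1).mul_const _

/-- Semiclassical limit of the ε-deformed product:
`lim_{ℏ → 0⁺} (f ⋆_{ℏ,ε} g)(x,y) = f(x,y)·g(x,y)`. -/
theorem moyalEps_semiclassical_limit (ε : ℝ) (f g : SchwartzMap (ℝ × ℝ) ℂ) (m : ℝ × ℝ) :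
    Tendsto (fun ℏ : ℝ => moyalEps ℏ ε (⇑f) (⇑g) m) (nhdsWithin 0 (Set.Ioi 0))
      (nhds (f m * g m)) := by
  have hkey : ∀ ℏ : ℝ, ℏ ∈ Set.Ioi (0:ℝ) →
      moyalEps ℏ ε ⇑f ⇑g m
        = ((2*Real.pi)^2 : ℝ)⁻¹ • ∫ c : ℝ × ℝ, g (m - ℏ • c) * Gfun ε f m c := by
    intro ℏ hℏ
    have hpos : (0:ℝ) < ℏ := hℏ
    show ((2 * Real.pi * ℏ) ^ 2 : ℝ)⁻¹ •
        (∫ ab : (ℝ × ℝ) × (ℝ × ℝ), f ab.1 * g ab.2 * epsKernel ℏ ε m ab.1 ab.2) = _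
    rw [stepB ℏ ε f g m hpos.ne', stepC ℏ ε f g m hpos, smul_smul]
    congr 1
    have hπ : Real.pi ≠ 0 := Real.pi_ne_zero
    field_simp
  have hlim := (stepD ε f g m).const_smul (((2*Real.pi)^2 : ℝ)⁻¹)
  have heval : (((2*Real.pi)^2 : ℝ)⁻¹) • ∫ c : ℝ × ℝ, g m * Gfun ε f m c = f m * g m := by
    rw [MeasureTheory.integral_const_mul, integral_Gfun]
    rw [Complex.real_smul, Complex.real_smul]
    push_cast
    have hπ : (Real.pi : ℂ) ≠ 0 := Complex.ofReal_ne_zero.mpr Real.pi_ne_zero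
    field_simp
    ring
  rw [heval] at hlim
  apply hlim.congr'
  filter_upwards [self_mem_nhdsWithin] with ℏ hℏ
  exact (hkey ℏ hℏ).symm
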